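/- Let X = U₁# G# (U₂#)^T be of rank r, where U₁# ∈ ℝ^{n₁×r}, U₂# ∈ ℝ^{n₂×r} both satisfy the SSC, (U_i#)^T e = e, and G# ∈ ℝ^{r×r}. Suppose (U₁*, G*, U₂*) is any feasible point for min |det(G)| s.t. X = U₁ G U₂^T, U_i^T e = e, U_i ≥ 0, with |det(G*)| ≤ |det(G#)|. Then there exist permutation matrices Π₁, Π₂ such that U₁* = U₁# Π₁, U₂* = U₂# Π₂, and G* = Π₁^T G# Π₂. -/

import Mathlib

open Matrix

/-- Euclidean (ℓ₂) norm of a finitely supported real vector. -/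
noncomputable def l2 {r : Type*} [Fintype r] (x : r → ℝ) : ℝ :=
  Real.sqrt (∑ i, x i ^ 2)

/-- The convex cone generated by the rows of `H`. -/
def coneRows {n r : Type*} [Fintype n] [Fintype r]
    (H : Matrix n r ℝ) : Set (r → ℝ) :=
  {x | ∃ y : n → ℝ, (∀ i, 0 ≤ y i) ∧ x = Hᵀ *ᵥ y}

/-- The sufficiently scattered condition (SSC1 and SSC2) for a nonnegative
matrix `H ∈ ℝ₊^{n×r}`. -/
def SSC {n r : Type*} [Fintype n] [Fintype r] [DecidableEq r]
    (H : Matrix n r ℝ) : Prop :=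
  (∀ i j, 0 ≤ H i j) ∧
  ({x : r → ℝ | (∀ i, 0 ≤ x i) ∧
      Real.sqrt ((Fintype.card r : ℝ) - 1) * l2 x ≤ ∑ i, x i} ⊆ coneRows H) ∧
  ({y : r → ℝ | ∀ i, 0 ≤ (H *ᵥ y) i} ∩
      frontier {x : r → ℝ | l2 x ≤ ∑ i, x i} =
    {v : r → ℝ | ∃ lam : ℝ, 0 ≤ lam ∧ ∃ k : r, v = lam • (Pi.single k 1 : r → ℝ)})

lemma l2_nonneg {r : Type*} [Fintype r] (x : r → ℝ) : 0 ≤ l2 x := Real.sqrt_nonneg _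

lemma l2_sq {r : Type*} [Fintype r] (x : r → ℝ) : l2 x ^ 2 = ∑ i, x i ^ 2 := by
  rw [l2, Real.sq_sqrt]; positivity

lemma l2_eq_norm {r : ℕ} (x : Fin r → ℝ) :
    l2 x = ‖(WithLp.toLp 2 x : EuclideanSpace ℝ (Fin r))‖ := by
  rw [EuclideanSpace.norm_eq, l2]
  congr 1
  exact Finset.sum_congr rfl fun i _ => (sq_abs _).symm

/-- SSC1 implies the dual cone of the rows is contained in `C* = {y : ∑ y ≥ ‖y‖}`. -/
lemma dual_cone_bound {n r : ℕ} {H : Matrix (Fin n) (Fin r) ℝ}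
    (hssc1 : {x : Fin r → ℝ | (∀ i, 0 ≤ x i) ∧
      Real.sqrt ((Fintype.card (Fin r) : ℝ) - 1) * l2 x ≤ ∑ i, x i} ⊆ coneRows H)
    (y : Fin r → ℝ) (hy : ∀ i, 0 ≤ (H *ᵥ y) i) : l2 y ≤ ∑ i, y i := by
  set t := l2 y with ht
  set s := ∑ i, y i with hs
  have ht0 : 0 ≤ t := l2_nonneg y
  have htsq : t ^ 2 = ∑ i, y i ^ 2 := l2_sq y
  rcases eq_or_lt_of_le ht0 with h0 | hpos
  · -- t = 0 : y = 0
    have hsum0 : ∑ i, y i ^ 2 = 0 := by rw [← htsq, ← h0]; ring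
    have hzero : ∀ i ∈ Finset.univ, y i ^ 2 = 0 :=
      (Finset.sum_eq_zero_iff_of_nonneg (fun i _ => sq_nonneg (y i))).mp hsum0
    have : ∀ i, y i = 0 := fun i => by
      have := hzero i (Finset.mem_univ i); nlinarith [this]
    rw [← h0, hs]
    exact Finset.sum_nonneg fun i _ => le_of_eq (this i).symm
  · -- t > 0
    have hcs : s ^ 2 ≤ (r : ℝ) * t ^ 2 := by
      have := sq_sum_le_card_mul_sum_sq (s := (Finset.univ : Finset (Fin r))) (f := y)
      rw [htsq, hs]
      simpa using this
    have hyle : ∀ i, y i ≤ t := by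
      intro i
      have h1 : y i ^ 2 ≤ t ^ 2 := by
        rw [htsq]
        exact Finset.single_le_sum (f := fun i => y i ^ 2) (fun i _ => sq_nonneg _)
          (Finset.mem_univ i)
      nlinarith
    have hr1 : (1 : ℝ) ≤ (r : ℝ) := by
      have : r ≠ 0 := by
        rintro rfl
        have h0 : t ^ 2 = 0 := by simpa using htsq
        nlinarith
      exact_mod_cast Nat.one_le_iff_ne_zero.mpr this
    -- the separating vector x = t•e − y
    set x : Fin r → ℝ := fun i => t - y i with hx
    have hxsum : ∑ i, x i = r * t - s := by
      simp [hx, Finset.sum_sub_distrib, hs]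
    have h2ts : ∑ i, 2 * t * y i = 2 * t * s := by rw [← Finset.mul_sum, hs]
    have hxsq : ∑ i, x i ^ 2 = (r + 1) * t ^ 2 - 2 * t * s := by
      have h1 : ∑ i, x i ^ 2 = ∑ i, ((t ^ 2 + y i ^ 2) - 2 * t * y i) :=
        Finset.sum_congr rfl fun i _ => by rw [hx]; ring
      rw [h1, Finset.sum_sub_distrib, Finset.sum_add_distrib, Finset.sum_const, h2ts, ← htsq]
      simp [Finset.card_univ]
      ring
    have hsrt : s ≤ r * t := by
      have h' : s ^ 2 ≤ ((r : ℝ) * t) ^ 2 := by nlinarith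
      nlinarith [h', mul_nonneg (by linarith : (0:ℝ) ≤ (r:ℝ)) ht0]
    have hxC : x ∈ {x : Fin r → ℝ | (∀ i, 0 ≤ x i) ∧
        Real.sqrt ((Fintype.card (Fin r) : ℝ) - 1) * l2 x ≤ ∑ i, x i} := by
      constructor
      · intro i; rw [hx]; simp; exact hyle i
      · have hb : (Real.sqrt ((Fintype.card (Fin r) : ℝ) - 1) * l2 x) ^ 2 ≤ (∑ i, x i) ^ 2 := by
          rw [mul_pow, l2_sq, Real.sq_sqrt (by simp [Fintype.card_fin]; exact_mod_cast hr1),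
            hxsq, hxsum]
          push_cast [Fintype.card_fin]
          have hid : ((r:ℝ) * t - s) ^ 2 - ((r:ℝ) - 1) * (((r:ℝ) + 1) * t ^ 2 - 2 * t * s)
              = (t - s) ^ 2 := by ring
          linarith [sq_nonneg (t - s), hid]
        have h1 : 0 ≤ Real.sqrt ((Fintype.card (Fin r) : ℝ) - 1) * l2 x :=
          mul_nonneg (Real.sqrt_nonneg _) (l2_nonneg _)
        have h2 : 0 ≤ ∑ i, x i := by rw [hxsum]; linarith
        nlinarith [hb, h1, h2]
    obtain ⟨z, hz, hxz⟩ := hssc1 hxC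
    -- inner product ⟨x, y⟩ = ∑ z k * (H y) k ≥ 0
    have hinner : ∑ i, x i * y i = ∑ k, z k * (H *ᵥ y) k := by
      rw [hxz]
      simp only [mulVec, dotProduct, transpose_apply, Finset.sum_mul]
      rw [Finset.sum_comm]
      refine Finset.sum_congr rfl fun k _ => ?_
      simp [Finset.mul_sum]
      refine Finset.sum_congr rfl fun i _ => by ring
    have hge : 0 ≤ ∑ i, x i * y i := by
      rw [hinner]
      exact Finset.sum_nonneg fun k _ => mul_nonneg (hz k) (hy k)
    have hval : ∑ i, x i * y i = t * s - t ^ 2 := by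
      have : ∀ i, x i * y i = t * y i - y i ^ 2 := fun i => by rw [hx]; ring
      rw [Finset.sum_congr rfl fun i _ => this i, Finset.sum_sub_distrib, ← htsq,
        ← Finset.mul_sum, ← hs]
    nlinarith [hge, hval]

/-- Hadamard's inequality (column version). -/
lemma hadamard_ineq {r : ℕ} (A : Matrix (Fin r) (Fin r) ℝ) :
    |A.det| ≤ ∏ j, l2 (fun i => A i j) := by
  haveI : Fact (Module.finrank ℝ (EuclideanSpace ℝ (Fin r)) = r) :=
    ⟨finrank_euclideanSpace_fin⟩
  set b := EuclideanSpace.basisFun (Fin r) ℝ with hb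
  set o := b.toBasis.orientation with ho
  set v : Fin r → EuclideanSpace ℝ (Fin r) := fun j => (WithLp.toLp 2 (fun i => A i j) : EuclideanSpace ℝ (Fin r)) with hv
  have h1 : |o.volumeForm v| = |b.toBasis.det v| := o.volumeForm_robust' b v
  have h2 : b.toBasis.det v = A.det := by
    rw [Module.Basis.det_apply]
    congr 1
  have h3 := o.abs_volumeForm_apply_le v
  rw [h1, h2] at h3
  refine h3.trans_eq ?_
  exact Finset.prod_congr rfl fun j _ => (l2_eq_norm _).symm

/-- A point with `l2 v = ∑ v` lies on the frontier of `{x | l2 x ≤ ∑ x}` when `r ≥ 2`. -/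
lemma mem_frontier_of_eq {r : ℕ} (hr : 2 ≤ r) (v : Fin r → ℝ)
    (hv : l2 v = ∑ i, v i) :
    v ∈ frontier {x : Fin r → ℝ | l2 x ≤ ∑ i, x i} := by
  rw [frontier]
  constructor
  · exact subset_closure (le_of_eq hv)
  · intro hmem
    rw [mem_interior_iff_mem_nhds, Metric.mem_nhds_iff] at hmem
    obtain ⟨ε, hε, hball⟩ := hmem
    -- take w = v - δ • 1 with δ = ε/2
    set δ : ℝ := ε / 2 with hδ
    have hδ0 : 0 < δ := by positivity
    set w : Fin r → ℝ := fun i => v i - δ with hw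
    have hwb : w ∈ Metric.ball v ε := by
      rw [Metric.mem_ball, dist_pi_lt_iff hε]
      intro i
      rw [hw]
      simp [Real.dist_eq, abs_of_pos hδ0]
      linarith
    have hwS : l2 w ≤ ∑ i, w i := hball hwb
    have hsum : ∑ i, w i = (∑ i, v i) - r * δ := by
      rw [hw]
      rw [Finset.sum_sub_distrib, Finset.sum_const, Finset.card_univ, Fintype.card_fin,
        nsmul_eq_mul]
    -- l2 w ≥ l2 v - δ * √r
    have hsqrtr : l2 (fun _ : Fin r => δ) = δ * Real.sqrt r := by
      rw [l2]
      simp [Finset.card_univ]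
      rw [Real.sqrt_sq hδ0.le]
      ring
    have htri : l2 v ≤ l2 w + δ * Real.sqrt r := by
      rw [l2_eq_norm, l2_eq_norm]
      have : (WithLp.toLp 2 v : EuclideanSpace ℝ (Fin r))
          = (WithLp.toLp 2 w : EuclideanSpace ℝ (Fin r)) + (WithLp.toLp 2 (fun _ => δ) : EuclideanSpace ℝ (Fin r)) := by
        ext i
        show v i = w i + δ
        rw [hw]; ring
      rw [this]
      refine (norm_add_le _ _).trans ?_
      have : ‖(WithLp.toLp 2 (fun _ : Fin r => δ) : EuclideanSpace ℝ (Fin r))‖ = δ * Real.sqrt r := by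
        rw [← l2_eq_norm]; exact hsqrtr
      rw [this]
    have hsr : Real.sqrt r < r := by
      have h1 : (1:ℝ) < r := by exact_mod_cast hr.trans_lt' one_lt_two
      have h2 : Real.sqrt r < Real.sqrt ((r:ℝ) ^ 2) :=
        Real.sqrt_lt_sqrt (by positivity) (by nlinarith)
      rwa [Real.sqrt_sq (by positivity)] at h2
    rw [hv] at htri
    rw [hsum] at hwS
    nlinarith

/-- full row rank gives a right inverse. -/
lemma exists_right_inverse {m n : ℕ} (A : Matrix (Fin m) (Fin n) ℝ) (h : (m : ℕ) ≤ A.rank) :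
    ∃ B : Matrix (Fin n) (Fin m) ℝ, A * B = 1 := by
  have hrange : LinearMap.range A.mulVecLin = ⊤ := by
    apply Submodule.eq_top_of_finrank_eq
    apply le_antisymm (Submodule.finrank_le _)
    simpa [Module.finrank_pi, Matrix.rank] using h
  have hsurj : Function.Surjective A.mulVecLin := LinearMap.range_eq_top.mp hrange
  choose f hf using hsurj
  refine ⟨Matrix.of fun i j => f (Pi.single j 1) i, ?_⟩
  ext i j
  have : A *ᵥ (f (Pi.single j 1)) = Pi.single j 1 := hf _
  calc (A * Matrix.of fun i j => f (Pi.single j 1) i) i j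
      = (A *ᵥ (f (Pi.single j 1))) i := by
        simp [Matrix.mul_apply, Matrix.mulVec, dotProduct]
    _ = (1 : Matrix (Fin m) (Fin m) ℝ) i j := by rw [this]; simp [Matrix.one_apply, Pi.single_apply, eq_comm]

lemma ssc_not_card_one {n : ℕ} (H : Matrix (Fin n) (Fin 1) ℝ) : ¬ SSC H := by
  rintro ⟨hpos, h1, h2⟩
  have hv : (fun _ : Fin 1 => (1:ℝ)) ∈
      {v : Fin 1 → ℝ | ∃ lam : ℝ, 0 ≤ lam ∧ ∃ k : Fin 1,
        v = lam • (Pi.single k 1 : Fin 1 → ℝ)} := by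
    refine ⟨1, zero_le_one, 0, ?_⟩
    funext i
    simp [Pi.single_apply, Subsingleton.elim i 0]
  rw [← h2] at hv
  obtain ⟨-, hfr⟩ := hv
  have hop : IsOpen {x : Fin 1 → ℝ | 0 < x 0} :=
    isOpen_lt continuous_const (continuous_apply 0)
  have hsub : {x : Fin 1 → ℝ | 0 < x 0} ⊆ {x : Fin 1 → ℝ | l2 x ≤ ∑ i, x i} := by
    intro x hx
    show l2 x ≤ ∑ i, x i
    rw [l2, Fin.sum_univ_one, Fin.sum_univ_one, Real.sqrt_sq (le_of_lt hx)]
  have hint : (fun _ : Fin 1 => (1:ℝ)) ∈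
      interior {x : Fin 1 → ℝ | l2 x ≤ ∑ i, x i} :=
    mem_interior.mpr ⟨_, hsub, hop, by norm_num⟩
  rw [frontier] at hfr
  exact hfr.2 hint

lemma key_perm {n r : ℕ} (hr : 2 ≤ r) {H : Matrix (Fin n) (Fin r) ℝ} (hssc : SSC H)
    (A : Matrix (Fin r) (Fin r) ℝ) (hpos : ∀ i j, 0 ≤ (H * A) i j)
    (hsum : ∀ j, ∑ i, A i j = 1) (hdet : 1 ≤ |A.det|) :
    ∃ σ : Equiv.Perm (Fin r), A = σ.permMatrix ℝ := by
  have colK : ∀ j i, 0 ≤ (H *ᵥ fun k => A k j) i := by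
    intro j i
    simpa [Matrix.mul_apply, Matrix.mulVec, dotProduct] using hpos i j
  have hle : ∀ j, l2 (fun k => A k j) ≤ 1 := fun j =>
    (dual_cone_bound hssc.2.1 _ (colK j)).trans_eq (hsum j)
  have hprod1 : ∀ (s : Finset (Fin r)), ∏ j ∈ s, l2 (fun k => A k j) ≤ 1 :=
    fun s => Finset.prod_le_one (fun j _ => l2_nonneg _) (fun j _ => hle j)
  have heq1 : ∀ j, l2 (fun k => A k j) = 1 := by
    intro j
    refine le_antisymm (hle j) ?_
    have h1 : (1:ℝ) ≤ ∏ j, l2 (fun k => A k j) := hdet.trans (hadamard_ineq A)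
    have h2 : ∏ j', l2 (fun k => A k j')
        = l2 (fun k => A k j) * ∏ j' ∈ Finset.univ.erase j, l2 (fun k => A k j') :=
      (Finset.mul_prod_erase _ _ (Finset.mem_univ j)).symm
    have h3 := hprod1 (Finset.univ.erase j)
    nlinarith [l2_nonneg (fun k => A k j), h1, h2, h3]
  -- each column is on the boundary, apply SSC2
  have hcol : ∀ j, ∃ k : Fin r, (fun i => A i j) = Pi.single k (1:ℝ) := by
    intro j
    have hmem : (fun i => A i j) ∈
        ({y : Fin r → ℝ | ∀ i, 0 ≤ (H *ᵥ y) i} ∩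
          frontier {x : Fin r → ℝ | l2 x ≤ ∑ i, x i}) :=
      ⟨colK j, mem_frontier_of_eq hr _ ((heq1 j).trans (hsum j).symm)⟩
    rw [hssc.2.2] at hmem
    obtain ⟨lam, hlam, k, hk⟩ := hmem
    have hlam1 : lam = 1 := by
      have := hsum j
      rw [show (fun i => A i j) = lam • (Pi.single k 1 : Fin r → ℝ) from hk] at this
      simpa [Finset.smul_sum, Pi.single_apply] using this
    exact ⟨k, by rw [hk, hlam1, one_smul]⟩
  choose k hk using hcol
  have hinj : Function.Injective k := by
    intro j1 j2 hkj
    by_contra hne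
    have : A.det = 0 := by
      apply Matrix.det_zero_of_column_eq hne
      intro i
      have e1 := congrFun (hk j1) i
      have e2 := congrFun (hk j2) i
      rw [e1, e2, hkj]
    rw [this] at hdet
    norm_num at hdet
  have hbij : Function.Bijective k := (Finite.injective_iff_bijective).mp hinj
  refine ⟨(Equiv.ofBijective k hbij).symm, ?_⟩
  ext i j
  have e1 := congrFun (hk j) i
  rw [e1]
  simp only [Equiv.Perm.permMatrix, PEquiv.toMatrix_apply, Equiv.toPEquiv_apply,
    Option.mem_def, Option.some.injEq, Pi.single_apply]
  by_cases h : i = k j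
  · subst h
    have hsymm : (Equiv.ofBijective k hbij).symm (k j) = j :=
      (Equiv.ofBijective k hbij).symm_apply_apply j
    simp [hsymm]
  · have hne : ¬ ((Equiv.ofBijective k hbij).symm i = j) := by
      intro hc
      apply h
      have h2 := (Equiv.ofBijective k hbij).apply_symm_apply i
      rw [hc] at h2
      exact h2.symm
    simp [h, hne]

/-- determinant at most one. -/
lemma det_le_one {n r : ℕ} {H : Matrix (Fin n) (Fin r) ℝ} (hssc : SSC H)
    (A : Matrix (Fin r) (Fin r) ℝ) (hpos : ∀ i j, 0 ≤ (H * A) i j)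
    (hsum : ∀ j, ∑ i, A i j = 1) : |A.det| ≤ 1 := by
  have colK : ∀ j i, 0 ≤ (H *ᵥ fun k => A k j) i := by
    intro j i
    simpa [Matrix.mul_apply, Matrix.mulVec, dotProduct] using hpos i j
  have hle : ∀ j, l2 (fun k => A k j) ≤ 1 := fun j =>
    (dual_cone_bound hssc.2.1 _ (colK j)).trans_eq (hsum j)
  exact (hadamard_ineq A).trans
    (Finset.prod_le_one (fun j _ => l2_nonneg _) (fun j _ => hle j))

lemma permMatrix_transpose {r : ℕ} (σ : Equiv.Perm (Fin r)) :
    (σ.permMatrix ℝ)ᵀ = (σ⁻¹).permMatrix ℝ := by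
  show σ.toPEquiv.toMatrixᵀ = (σ⁻¹).toPEquiv.toMatrix
  rw [← PEquiv.toMatrix_symm, ← Equiv.toPEquiv_symm]
  rfl

lemma permMatrix_mul {r : ℕ} (σ τ : Equiv.Perm (Fin r)) :
    σ.permMatrix ℝ * τ.permMatrix ℝ = (τ * σ).permMatrix ℝ := by
  show σ.toPEquiv.toMatrix * τ.toPEquiv.toMatrix = _
  rw [← PEquiv.toMatrix_trans, ← Equiv.toPEquiv_trans]
  rfl

lemma permMatrix_one {r : ℕ} : ((1 : Equiv.Perm (Fin r)).permMatrix ℝ) = 1 := by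
  show (1 : Equiv.Perm (Fin r)).toPEquiv.toMatrix = 1
  rw [show (1 : Equiv.Perm (Fin r)).toPEquiv = PEquiv.refl (Fin r) from Equiv.toPEquiv_refl,
    PEquiv.toMatrix_refl]

lemma permMatrix_tr_mul {r : ℕ} (σ : Equiv.Perm (Fin r)) :
    (σ.permMatrix ℝ)ᵀ * σ.permMatrix ℝ = 1 := by
  rw [permMatrix_transpose, permMatrix_mul, mul_inv_cancel, permMatrix_one]

set_option maxHeartbeats 2000000 in
theorem main_aux {n₁ n₂ r : ℕ} (hr : 2 ≤ r)
    (X : Matrix (Fin n₁) (Fin n₂) ℝ)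
    (U₁ U₁star : Matrix (Fin n₁) (Fin r) ℝ)
    (U₂ U₂star : Matrix (Fin n₂) (Fin r) ℝ)
    (G Gstar : Matrix (Fin r) (Fin r) ℝ)
    (hrank : X.rank = r)
    (hU₁ssc : SSC U₁) (hU₂ssc : SSC U₂)
    (hU₁e : ∀ j, ∑ i, U₁ i j = 1) (hU₂e : ∀ j, ∑ i, U₂ i j = 1)
    (hX : X = U₁ * G * U₂ᵀ)
    (hU₁star : ∀ i j, 0 ≤ U₁star i j) (hU₂star : ∀ i j, 0 ≤ U₂star i j)
    (hU₁stare : ∀ j, ∑ i, U₁star i j = 1) (hU₂stare : ∀ j, ∑ i, U₂star i j = 1)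
    (hXstar : X = U₁star * Gstar * U₂starᵀ)
    (hdet : |Gstar.det| ≤ |G.det|) :
    ∃ (σ₁ σ₂ : Equiv.Perm (Fin r)),
      U₁star = U₁ * σ₁.permMatrix ℝ ∧
      U₂star = U₂ * σ₂.permMatrix ℝ ∧
      Gstar = (σ₁.permMatrix ℝ)ᵀ * G * σ₂.permMatrix ℝ := by
  -- rank facts
  have hrU₂t : (r : ℕ) ≤ U₂ᵀ.rank := by
    have h := Matrix.rank_mul_le_right (U₁ * G) U₂ᵀ
    rw [← hX, hrank] at h; exact h
  have hrU₁t : (r : ℕ) ≤ U₁ᵀ.rank := by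
    rw [Matrix.rank_transpose]
    have h := (Matrix.rank_mul_le_left (U₁ * G) U₂ᵀ).trans (Matrix.rank_mul_le_left U₁ G)
    rw [← hX, hrank] at h; exact h
  have hrU₂st : (r : ℕ) ≤ U₂starᵀ.rank := by
    have h := Matrix.rank_mul_le_right (U₁star * Gstar) U₂starᵀ
    rw [← hXstar, hrank] at h; exact h
  have hrU₁st : (r : ℕ) ≤ U₁starᵀ.rank := by
    rw [Matrix.rank_transpose]
    have h := (Matrix.rank_mul_le_left (U₁star * Gstar) U₂starᵀ).trans
      (Matrix.rank_mul_le_left U₁star Gstar)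
    rw [← hXstar, hrank] at h; exact h
  have hrGs : (r : ℕ) ≤ Gstar.rank := by
    have hXs' : X = U₁star * (Gstar * U₂starᵀ) := by rw [hXstar, Matrix.mul_assoc]
    have h := (Matrix.rank_mul_le_right U₁star (Gstar * U₂starᵀ)).trans
      (Matrix.rank_mul_le_left Gstar U₂starᵀ)
    rw [← hXs', hrank] at h; exact h
  obtain ⟨W₂, hW₂⟩ := exists_right_inverse U₂ᵀ hrU₂t
  obtain ⟨W₁, hW₁⟩ := exists_right_inverse U₁ᵀ hrU₁t
  obtain ⟨W₂s, hW₂s⟩ := exists_right_inverse U₂starᵀ hrU₂st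
  obtain ⟨W₁s, hW₁s⟩ := exists_right_inverse U₁starᵀ hrU₁st
  obtain ⟨Bs, hBs⟩ := exists_right_inverse Gstar hrGs
  have hBs' : Bs * Gstar = 1 := mul_eq_one_comm.mp hBs
  have hBsT : Gstarᵀ * Bsᵀ = 1 := by
    rw [← Matrix.transpose_mul, hBs', Matrix.transpose_one]
  have hW₁' : W₁ᵀ * U₁ = 1 := by
    have := congrArg Matrix.transpose hW₁
    rwa [Matrix.transpose_mul, Matrix.transpose_transpose, Matrix.transpose_one] at this
  have hEq : U₁ * G * U₂ᵀ = U₁star * Gstar * U₂starᵀ := by rw [← hX, ← hXstar]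
  -- A₁
  set A₁ : Matrix (Fin r) (Fin r) ℝ := G * U₂ᵀ * W₂s * Bs with hA₁def
  have hA₁ : U₁star = U₁ * A₁ := by
    have e1 : U₁star * Gstar * U₂starᵀ * W₂s = U₁star * Gstar := by
      rw [Matrix.mul_assoc (U₁star * Gstar), hW₂s, Matrix.mul_one]
    calc U₁star = U₁star * Gstar * Bs := by rw [Matrix.mul_assoc, hBs, Matrix.mul_one]
      _ = U₁star * Gstar * U₂starᵀ * W₂s * Bs := by rw [e1]
      _ = U₁ * G * U₂ᵀ * W₂s * Bs := by rw [← hEq]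
      _ = U₁ * A₁ := by rw [hA₁def]; simp only [Matrix.mul_assoc]
  -- transposed equation and A₂
  have hEqT : U₂ * Gᵀ * U₁ᵀ = U₂star * Gstarᵀ * U₁starᵀ := by
    have := congrArg Matrix.transpose hEq
    simpa only [Matrix.transpose_mul, Matrix.transpose_transpose, Matrix.mul_assoc] using this
  set A₂ : Matrix (Fin r) (Fin r) ℝ := Gᵀ * U₁ᵀ * W₁s * Bsᵀ with hA₂def
  have hA₂ : U₂star = U₂ * A₂ := by
    have e1 : U₂star * Gstarᵀ * U₁starᵀ * W₁s = U₂star * Gstarᵀ := by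
      rw [Matrix.mul_assoc (U₂star * Gstarᵀ), hW₁s, Matrix.mul_one]
    have hBsT' : Bsᵀ * Gstarᵀ = 1 := by
      rw [← Matrix.transpose_mul, hBs, Matrix.transpose_one]
    calc U₂star = U₂star * Gstarᵀ * Bsᵀ := by rw [Matrix.mul_assoc, hBsT, Matrix.mul_one]
      _ = U₂star * Gstarᵀ * U₁starᵀ * W₁s * Bsᵀ := by rw [e1]
      _ = U₂ * Gᵀ * U₁ᵀ * W₁s * Bsᵀ := by
          rw [show U₂star * Gstarᵀ * U₁starᵀ = U₂ * Gᵀ * U₁ᵀ from by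
            simp only [Matrix.mul_assoc] at hEqT ⊢; exact hEqT.symm]
      _ = U₂ * A₂ := by rw [hA₂def]; simp only [Matrix.mul_assoc]
  -- cancellation : G = A₁ * Gstar * A₂ᵀ
  have hcanc : ∀ (M N : Matrix (Fin r) (Fin r) ℝ), U₁ * M * U₂ᵀ = U₁ * N * U₂ᵀ → M = N := by
    intro M N h
    have h1 := congrArg (fun Z => W₁ᵀ * Z * W₂) h
    calc M = W₁ᵀ * U₁ * M * (U₂ᵀ * W₂) := by rw [hW₂, hW₁', Matrix.mul_one, Matrix.one_mul]
      _ = W₁ᵀ * (U₁ * M * U₂ᵀ) * W₂ := by simp only [Matrix.mul_assoc]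
      _ = W₁ᵀ * (U₁ * N * U₂ᵀ) * W₂ := by rw [h]
      _ = W₁ᵀ * U₁ * N * (U₂ᵀ * W₂) := by simp only [Matrix.mul_assoc]
      _ = N := by rw [hW₂, hW₁', Matrix.mul_one, Matrix.one_mul]
  have hGeq : G = A₁ * Gstar * A₂ᵀ := by
    apply hcanc
    calc U₁ * G * U₂ᵀ = U₁star * Gstar * U₂starᵀ := hEq
      _ = (U₁ * A₁) * Gstar * (U₂ * A₂)ᵀ := by rw [← hA₁, ← hA₂]
      _ = U₁ * (A₁ * Gstar * A₂ᵀ) * U₂ᵀ := by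
          rw [Matrix.transpose_mul]; simp only [Matrix.mul_assoc]
  -- determinants
  have hdetGs : Gstar.det ≠ 0 := by
    intro h0
    have hd := congrArg Matrix.det hBs
    rw [Matrix.det_mul, h0, Matrix.det_one] at hd
    norm_num at hd
  have hdetG : G.det = A₁.det * Gstar.det * A₂.det := by
    rw [hGeq, Matrix.det_mul, Matrix.det_mul, Matrix.det_transpose]
  have habs : 1 ≤ |A₁.det| * |A₂.det| := by
    have h1 : |G.det| = |A₁.det| * |Gstar.det| * |A₂.det| := by
      rw [hdetG, abs_mul, abs_mul]
    have h2 : 0 < |Gstar.det| := abs_pos.mpr hdetGs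
    rw [h1] at hdet
    nlinarith [abs_nonneg A₁.det, abs_nonneg A₂.det]
  -- column sums of A₁ and A₂
  have hsum₁ : ∀ j, ∑ i, A₁ i j = 1 := by
    intro j
    have h := hU₁stare j
    rw [hA₁] at h
    simp only [Matrix.mul_apply] at h
    rw [Finset.sum_comm] at h
    calc ∑ i, A₁ i j = ∑ k, (∑ i, U₁ i k) * A₁ k j := by
          refine Finset.sum_congr rfl fun k _ => ?_; rw [hU₁e k, one_mul]
      _ = ∑ k, ∑ i, U₁ i k * A₁ k j := by
          refine Finset.sum_congr rfl fun k _ => ?_; rw [Finset.sum_mul]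
      _ = 1 := h
  have hsum₂ : ∀ j, ∑ i, A₂ i j = 1 := by
    intro j
    have h := hU₂stare j
    rw [hA₂] at h
    simp only [Matrix.mul_apply] at h
    rw [Finset.sum_comm] at h
    calc ∑ i, A₂ i j = ∑ k, (∑ i, U₂ i k) * A₂ k j := by
          refine Finset.sum_congr rfl fun k _ => ?_; rw [hU₂e k, one_mul]
      _ = ∑ k, ∑ i, U₂ i k * A₂ k j := by
          refine Finset.sum_congr rfl fun k _ => ?_; rw [Finset.sum_mul]
      _ = 1 := h
  have hpos₁ : ∀ i j, 0 ≤ (U₁ * A₁) i j := fun i j => by rw [← hA₁]; exact hU₁star i j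
  have hpos₂ : ∀ i j, 0 ≤ (U₂ * A₂) i j := fun i j => by rw [← hA₂]; exact hU₂star i j
  have hd₁ : |A₁.det| ≤ 1 := det_le_one hU₁ssc A₁ hpos₁ hsum₁
  have hd₂ : |A₂.det| ≤ 1 := det_le_one hU₂ssc A₂ hpos₂ hsum₂
  have he₁ : 1 ≤ |A₁.det| := by nlinarith [abs_nonneg A₁.det, abs_nonneg A₂.det]
  have he₂ : 1 ≤ |A₂.det| := by nlinarith [abs_nonneg A₁.det, abs_nonneg A₂.det]
  obtain ⟨σ₁, hσ₁⟩ := key_perm hr hU₁ssc A₁ hpos₁ hsum₁ he₁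
  obtain ⟨σ₂, hσ₂⟩ := key_perm hr hU₂ssc A₂ hpos₂ hsum₂ he₂
  refine ⟨σ₁, σ₂, by rw [hA₁, hσ₁], by rw [hA₂, hσ₂], ?_⟩
  rw [hGeq, hσ₁, hσ₂]
  calc Gstar = (1 : Matrix (Fin r) (Fin r) ℝ) * Gstar * 1 := by
        rw [Matrix.one_mul, Matrix.mul_one]
    _ = ((σ₁.permMatrix ℝ)ᵀ * σ₁.permMatrix ℝ) * Gstar
          * ((σ₂.permMatrix ℝ)ᵀ * σ₂.permMatrix ℝ) := by
        rw [permMatrix_tr_mul, permMatrix_tr_mul]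
    _ = (σ₁.permMatrix ℝ)ᵀ * (σ₁.permMatrix ℝ * Gstar * (σ₂.permMatrix ℝ)ᵀ)
          * σ₂.permMatrix ℝ := by simp only [Matrix.mul_assoc]


/-- Identifiability of min-vol order-2 nTD under the SSC (Theorem 4 /
Corollary 1): any feasible tri-factorization whose core has volume at most
that of the ground truth coincides with it up to permutations. -/
theorem minvol_tri_factorization_identifiable {n₁ n₂ r : ℕ}
    (X : Matrix (Fin n₁) (Fin n₂) ℝ)
    (U₁ U₁star : Matrix (Fin n₁) (Fin r) ℝ)
    (U₂ U₂star : Matrix (Fin n₂) (Fin r) ℝ)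
    (G Gstar : Matrix (Fin r) (Fin r) ℝ)
    (hrank : X.rank = r)
    (hU₁ssc : SSC U₁) (hU₂ssc : SSC U₂)
    (hU₁e : ∀ j, ∑ i, U₁ i j = 1) (hU₂e : ∀ j, ∑ i, U₂ i j = 1)
    (hX : X = U₁ * G * U₂ᵀ)
    (hU₁star : ∀ i j, 0 ≤ U₁star i j) (hU₂star : ∀ i j, 0 ≤ U₂star i j)
    (hU₁stare : ∀ j, ∑ i, U₁star i j = 1) (hU₂stare : ∀ j, ∑ i, U₂star i j = 1)
    (hXstar : X = U₁star * Gstar * U₂starᵀ)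
    (hdet : |Gstar.det| ≤ |G.det|) :
    ∃ (σ₁ σ₂ : Equiv.Perm (Fin r)),
      U₁star = U₁ * σ₁.permMatrix ℝ ∧
      U₂star = U₂ * σ₂.permMatrix ℝ ∧
      Gstar = (σ₁.permMatrix ℝ)ᵀ * G * σ₂.permMatrix ℝ := by
  rcases Nat.lt_or_ge r 2 with hlt | hge
  · interval_cases r
    · exact ⟨1, 1, by ext i j; exact j.elim0, by ext i j; exact j.elim0,
        by ext i j; exact i.elim0⟩
    · exact absurd hU₁ssc (ssc_not_card_one U₁)
  · exact main_aux hge X U₁ U₁star U₂ U₂star G Gstar hrank hU₁ssc hU₂ssc hU₁e hU₂e hX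
      hU₁star hU₂star hU₁stare hU₂stare hXstar hdet
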